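/- Let S be a Polish space, μ a Borel probability measure on S, and for each N let W_{N,1}, ..., W_{N,N} be an exchangeable family of S-valued random elements. Then the triangular array {W_{N,1:N}}_{N≥1} is μ-chaotic if and only if the empirical measures ν_N = N^{−1} Σ_{j=1}^N δ_{W_{N,j}}, viewed as random elements of the space P(S) of Borel probability measures on S with the topology of weak convergence, converge in distribution to the deterministic limit μ (i.e., the laws of ν_N converge weakly to the Dirac measure at μ). -/

import Mathlib

open MeasureTheory ProbabilityTheory Filter Topology BoundedContinuousFunction

noncomputable section

/-- A triangular array `W N ·` of random elements of `S` (row `N` having `N` meaningful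
entries `W N 0, …, W N (N - 1)`) is `μ`-chaotic if for every `r` and all bounded continuous
`g₁, …, g_r : S → ℝ` we have `E[∏ i, g i (W N i)] → ∏ i, ∫ g i dμ` as `N → ∞`. -/
def IsChaotic {Ω : Type*} [MeasurableSpace Ω] (P : Measure Ω)
    {S : Type*} [TopologicalSpace S] [MeasurableSpace S]
    (W : ℕ → ℕ → Ω → S) (μ : Measure S) : Prop :=
  ∀ (r : ℕ) (g : Fin r → BoundedContinuousFunction S ℝ),
    Tendsto (fun N : ℕ => ∫ ω, ∏ i : Fin r, (g i) (W N (i : ℕ) ω) ∂P) atTop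
      (𝓝 (∏ i : Fin r, ∫ x, (g i) x ∂μ))

/-- The empirical measure `N⁻¹ ∑_{j < N} δ_{W N j ω}` of row `N` of a triangular array `W`,
as a probability measure on `S` (with junk value `δ_{W N 0 ω}` when `N = 0`). -/
def empir {Ω S : Type*} [MeasurableSpace Ω] [MeasurableSpace S]
    (W : ℕ → ℕ → Ω → S) (N : ℕ) (ω : Ω) : ProbabilityMeasure S :=
  if h : 0 < N then
    ⟨(N : ENNReal)⁻¹ • ∑ j ∈ Finset.range N, Measure.dirac (W N j ω), by
      have hN : (N : ENNReal) ≠ 0 := by exact_mod_cast h.ne'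
      constructor
      simp [Measure.smul_apply, smul_eq_mul, ENNReal.inv_mul_cancel hN (by simp)]⟩
  else ⟨Measure.dirac (W N 0 ω), inferInstance⟩

/-! ### Auxiliary material -/

section AuxGeneral

/-- The falling-factorial ratio `N(N-1)⋯(N-r+1)/N^r` tends to `1`. -/
lemma descFactorial_div_pow_tendsto (r : ℕ) :
    Tendsto (fun N : ℕ => (N.descFactorial r : ℝ) / (N : ℝ) ^ r) atTop (𝓝 1) := by
  have h1 : Tendsto (fun N : ℕ => ∏ i ∈ Finset.range r, (1 - (i : ℝ) / N)) atTop (𝓝 1) := by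
    have := tendsto_finset_prod (f := fun (i : ℕ) (N : ℕ) => 1 - (i : ℝ) / N)
      (a := fun _ => (1 : ℝ)) (x := atTop) (Finset.range r) (fun i _ => by
        simpa using tendsto_const_nhds.sub (tendsto_const_div_atTop_nhds_zero_nat (i : ℝ)))
    simpa using this
  refine Tendsto.congr' ?_ h1
  filter_upwards [eventually_ge_atTop r, eventually_ge_atTop 1] with N hr h1N
  have hN0 : (N : ℝ) ≠ 0 := by positivity
  have hcast : (N.descFactorial r : ℝ) = ∏ i ∈ Finset.range r, ((N : ℝ) - i) := by
    rw [Nat.descFactorial_eq_prod_range, Nat.cast_prod]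
    exact Finset.prod_congr rfl fun i hi =>
      Nat.cast_sub (le_trans (le_of_lt (Finset.mem_range.mp hi)) hr)
  rw [hcast]
  rw [show ((N : ℝ)) ^ r = ∏ _i ∈ Finset.range r, (N : ℝ) by
    rw [Finset.prod_const, Finset.card_range]]
  rw [← Finset.prod_div_distrib]
  exact Finset.prod_congr rfl fun i _ => by field_simp

/-- Any injection `Fin r → Fin N` extends to a permutation of `Fin N`. -/
lemma exchange_perm {r N : ℕ} (hrN : r ≤ N) {φ : Fin r → Fin N}
    (hφ : Function.Injective φ) :
    ∃ σ : Equiv.Perm (Fin N), ∀ i : Fin r, σ (Fin.castLE hrN i) = φ i := by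
  classical
  have hι : Function.Injective (Fin.castLE hrN) := Fin.castLE_injective hrN
  let e : {x : Fin N // x ∈ Set.range (Fin.castLE hrN)} ≃ {x : Fin N // x ∈ Set.range φ} :=
    (Equiv.ofInjective _ hι).symm.trans (Equiv.ofInjective φ hφ)
  refine ⟨e.extendSubtype, fun i => ?_⟩
  rw [Equiv.extendSubtype_apply_of_mem e _ ⟨i, rfl⟩]
  have h1 : (Equiv.ofInjective _ hι).symm ⟨Fin.castLE hrN i, ⟨i, rfl⟩⟩ = i := by
    rw [Equiv.symm_apply_eq]; rfl
  simp [e, Equiv.trans_apply, h1]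

/-- A Chebyshev/Markov argument: if `X N → m` in `L²`, then for every `ε > 0` the probability
that `|X N - m| ≥ ε` tends to zero. -/
lemma tendsto_prob_of_L2 {Ω : Type*} [MeasurableSpace Ω] {P : Measure Ω}
    [IsProbabilityMeasure P] {X : ℕ → Ω → ℝ} {m : ℝ}
    (hint : ∀ N, Integrable (fun ω => (X N ω - m) ^ 2) P)
    (hL2 : Tendsto (fun N => ∫ ω, (X N ω - m) ^ 2 ∂P) atTop (𝓝 0)) {ε : ℝ} (hε : 0 < ε) :
    Tendsto (fun N => (P {ω | ε ≤ |X N ω - m|}).toReal) atTop (𝓝 0) := by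
  have hsub : ∀ N, {ω | ε ≤ |X N ω - m|} ⊆ {ω | ε ^ 2 ≤ (X N ω - m) ^ 2} := by
    intro N ω h
    simp only [Set.mem_setOf_eq] at h ⊢
    calc ε ^ 2 ≤ |X N ω - m| ^ 2 := pow_le_pow_left₀ hε.le h 2
      _ = (X N ω - m) ^ 2 := sq_abs _
  have markov : ∀ N, ε ^ 2 * (P {ω | ε ^ 2 ≤ (X N ω - m) ^ 2}).toReal
      ≤ ∫ ω, (X N ω - m) ^ 2 ∂P := fun N =>
    mul_meas_ge_le_integral_of_nonneg (Eventually.of_forall fun ω => sq_nonneg _) (hint N) _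
  refine squeeze_zero (fun N => ENNReal.toReal_nonneg) (fun N => ?_)
    (g := fun N => (∫ ω, (X N ω - m) ^ 2 ∂P) / ε ^ 2) ?_
  · rw [le_div_iff₀ (by positivity)]
    calc (P {ω | ε ≤ |X N ω - m|}).toReal * ε ^ 2
        ≤ (P {ω | ε ^ 2 ≤ (X N ω - m) ^ 2}).toReal * ε ^ 2 :=
          mul_le_mul_of_nonneg_right
            (ENNReal.toReal_mono (measure_ne_top P _) (measure_mono (hsub N)))
            (by positivity)
      _ ≤ _ := by rw [mul_comm]; exact markov N
  · simpa using hL2.div_const (ε ^ 2)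

/-- Coercion of a bounded continuous `ℝ≥0`-valued function to a real-valued one. -/
def toRealBCF {S : Type*} [TopologicalSpace S] (f : S →ᵇ NNReal) : S →ᵇ ℝ :=
  BoundedContinuousFunction.comp (fun x : NNReal => (x : ℝ))
    (LipschitzWith.of_dist_le_mul fun x y => by
      rw [NNReal.dist_eq, NNReal.coe_one, one_mul, Real.dist_eq]) f

@[simp] lemma toRealBCF_apply {S : Type*} [TopologicalSpace S] (f : S →ᵇ NNReal) (x : S) :
    toRealBCF f x = (f x : ℝ) := rfl

lemma testAgainstNN_toReal {S : Type*} [TopologicalSpace S] [MeasurableSpace S]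
    [OpensMeasurableSpace S] (ν : ProbabilityMeasure S) (f : S →ᵇ NNReal) :
    ((ν.toFiniteMeasure.testAgainstNN f : NNReal) : ℝ)
      = ∫ x, toRealBCF f x ∂(ν : Measure S) := by
  have h := BoundedContinuousFunction.toReal_lintegral_coe_eq_integral f (ν : Measure S)
  rw [FiniteMeasure.testAgainstNN]
  rw [show ((ν.toFiniteMeasure : Measure S)) = (ν : Measure S) from rfl]
  rw [show (((∫⁻ x, (f x : ENNReal) ∂(ν : Measure S)).toNNReal : NNReal) : ℝ)
      = (∫⁻ x, (f x : ENNReal) ∂(ν : Measure S)).toReal from rfl, h]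
  rfl

/-- Every open neighbourhood in the topology of weak convergence on probability measures
contains a finite-intersection basic neighbourhood given by test functions. -/
lemma nbhd_basis {S : Type*} [TopologicalSpace S] [MeasurableSpace S] [OpensMeasurableSpace S]
    {U : Set (ProbabilityMeasure S)} (hU : IsOpen U) {μ₀ : ProbabilityMeasure S}
    (hμU : μ₀ ∈ U) :
    ∃ (I : Finset (S →ᵇ NNReal)) (ε : (S →ᵇ NNReal) → ℝ),
      (∀ f, 0 < ε f) ∧
      ∀ ν : ProbabilityMeasure S,
        (∀ f ∈ I, dist (ν.toFiniteMeasure.testAgainstNN f)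
          (μ₀.toFiniteMeasure.testAgainstNN f) < ε f) → ν ∈ U := by
  classical
  have hev : IsInducing (fun φ : WeakDual NNReal (S →ᵇ NNReal) => (fun f => φ f)) := ⟨rfl⟩
  have hFM : IsInducing (FiniteMeasure.toWeakDualBCNN : FiniteMeasure S → _) := ⟨rfl⟩
  have hPM : IsInducing
      (ProbabilityMeasure.toFiniteMeasure : ProbabilityMeasure S → FiniteMeasure S) := ⟨rfl⟩
  have hΨ := hev.comp (hFM.comp hPM)
  have hU' : U ∈ 𝓝 μ₀ := hU.mem_nhds hμU
  rw [hΨ.nhds_eq_comap, Filter.mem_comap] at hU'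
  obtain ⟨V, hV, hVsub⟩ := hU'
  rw [nhds_pi, Filter.mem_pi'] at hV
  obtain ⟨I, t, ht, htV⟩ := hV
  have hball : ∀ f : S →ᵇ NNReal, ∃ δ : ℝ, 0 < δ ∧
      (Metric.ball (μ₀.toFiniteMeasure.testAgainstNN f) δ ⊆ t f) := by
    intro f
    obtain ⟨δ, hδ, hsub⟩ := Metric.mem_nhds_iff.mp (ht f)
    exact ⟨δ, hδ, hsub⟩
  choose ε hε1 hε2 using hball
  refine ⟨I, ε, hε1, fun ν hν => ?_⟩
  apply hVsub
  have : (fun f => ν.toFiniteMeasure.testAgainstNN f) ∈ Set.pi (↑I) t := by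
    intro f hf
    exact hε2 f (Metric.mem_ball.mpr (hν f hf))
  exact Set.mem_preimage.mpr (htV this)

end AuxGeneral

section Aux

variable {Ω S : Type*} [MeasurableSpace Ω] {P : Measure Ω} [IsProbabilityMeasure P]
  [TopologicalSpace S] [SecondCountableTopology S] [MeasurableSpace S] [BorelSpace S]
  {W : ℕ → ℕ → Ω → S}

/-- The empirical measure of a fixed-length tuple, as a probability measure. -/
def empFin {S : Type*} [MeasurableSpace S] {N : ℕ} (hN : 0 < N) (x : Fin N → S) :
    ProbabilityMeasure S :=
  ⟨(N : ENNReal)⁻¹ • ∑ j : Fin N, Measure.dirac (x j), by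
    have hN' : (N : ENNReal) ≠ 0 := by exact_mod_cast hN.ne'
    constructor
    simp [Measure.smul_apply, smul_eq_mul, Finset.card_univ,
      ENNReal.inv_mul_cancel hN' (by simp)]⟩

lemma empir_eq_empFin {N : ℕ} (hN : 0 < N) (ω : Ω) :
    empir W N ω = empFin hN (fun j : Fin N => W N (j : ℕ) ω) := by
  apply Subtype.ext
  have h1 : (empir W N ω : Measure S)
      = (N : ENNReal)⁻¹ • ∑ j ∈ Finset.range N, Measure.dirac (W N j ω) := by
    rw [empir]; exact congrArg Subtype.val (dif_pos hN)
  have h2 : ((empFin hN (fun j : Fin N => W N (j : ℕ) ω) : ProbabilityMeasure S) : Measure S)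
      = (N : ENNReal)⁻¹ • ∑ j : Fin N, Measure.dirac (W N (j : ℕ) ω) := rfl
  show (empir W N ω : Measure S) = _
  rw [h1]
  refine Eq.trans ?_ h2.symm
  congr 1
  exact (Fin.sum_univ_eq_sum_range (fun j => Measure.dirac (W N j ω)) N).symm

lemma empFin_testAgainstNN {N : ℕ} (hN : 0 < N) (x : Fin N → S) (f : S →ᵇ NNReal) :
    (empFin hN x).toFiniteMeasure.testAgainstNN f = (N : NNReal)⁻¹ * ∑ j : Fin N, f (x j) := by
  have hmeas : Measurable fun s => (f s : ENNReal) := f.measurable_coe_ennreal_comp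
  rw [FiniteMeasure.testAgainstNN]
  have hco : ((empFin hN x).toFiniteMeasure : Measure S)
      = (N : ENNReal)⁻¹ • ∑ j : Fin N, Measure.dirac (x j) := rfl
  rw [hco, lintegral_smul_measure, lintegral_finset_sum_measure]
  simp only [lintegral_dirac' _ hmeas]
  rw [show (N : ENNReal)⁻¹ = (((N : NNReal)⁻¹ : NNReal) : ENNReal) by
    rw [ENNReal.coe_inv (by exact_mod_cast hN.ne'), ENNReal.coe_natCast]]
  rw [← ENNReal.coe_finset_sum, smul_eq_mul, ← ENNReal.coe_mul, ENNReal.toNNReal_coe]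

lemma continuous_empFin {N : ℕ} (hN : 0 < N) :
    Continuous (empFin (S := S) hN) := by
  apply continuous_induced_rng.2
  apply continuous_induced_rng.2
  apply WeakBilin.continuous_of_continuous_eval
  intro f
  rw [show (fun x : Fin N → S =>
      (topDualPairing NNReal (S →ᵇ NNReal))
        ((FiniteMeasure.toWeakDualBCNN ∘ ProbabilityMeasure.toFiniteMeasure ∘ empFin hN) x) f)
      = fun x : Fin N → S => (N : NNReal)⁻¹ * ∑ j : Fin N, f (x j) from
    funext fun x => empFin_testAgainstNN hN x f]
  exact continuous_const.mul
    (continuous_finset_sum _ fun j _ => f.continuous.comp (continuous_apply j))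

lemma empir_integral (f : S →ᵇ ℝ) {N : ℕ} (hN : 0 < N) (ω : Ω) :
    ∫ x, f x ∂(empir W N ω : Measure S) = (N : ℝ)⁻¹ * ∑ j : Fin N, f (W N (j : ℕ) ω) := by
  have hco : (empir W N ω : Measure S)
      = (N : ENNReal)⁻¹ • ∑ j ∈ Finset.range N, Measure.dirac (W N j ω) := by
    rw [empir]; exact congrArg Subtype.val (dif_pos hN)
  rw [hco, integral_smul_measure, integral_finset_sum_measure (fun j _ => f.integrable _)]
  have : ∀ j : ℕ, ∫ x, f x ∂(Measure.dirac (W N j ω)) = f (W N j ω) := fun j =>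
    integral_dirac' f _ f.continuous.stronglyMeasurable
  simp only [this, Fin.sum_univ_eq_sum_range (fun j => f (W N j ω)), smul_eq_mul]
  congr 1
  simp [ENNReal.toReal_inv]

lemma prod_bcf_bound {r : ℕ} (g : Fin r → S →ᵇ ℝ) (x : Fin r → S) :
    ‖∏ i : Fin r, g i (x i)‖ ≤ ∏ i : Fin r, ‖g i‖ := by
  rw [Real.norm_eq_abs, Finset.abs_prod]
  exact Finset.prod_le_prod (fun i _ => abs_nonneg _)
    (fun i _ => (g i).norm_coe_le_norm (x i))

lemma integrable_prod_comp (hW : ∀ N j, Measurable (W N j)) {r N : ℕ}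
    (g : Fin r → S →ᵇ ℝ) (j : Fin r → ℕ) :
    Integrable (fun ω => ∏ i : Fin r, g i (W N (j i) ω)) P := by
  refine ⟨Measurable.aestronglyMeasurable ?_, HasFiniteIntegral.of_bounded
    (C := ∏ i : Fin r, ‖g i‖) (Eventually.of_forall fun ω => prod_bcf_bound g _)⟩
  exact Finset.measurable_prod _ fun i _ =>
    ((g i).continuous.measurable).comp (hW N (j i))

lemma norm_integral_prod_le {r N : ℕ}
    (g : Fin r → S →ᵇ ℝ) (j : Fin r → ℕ) :
    ‖∫ ω, ∏ i : Fin r, g i (W N (j i) ω) ∂P‖ ≤ ∏ i : Fin r, ‖g i‖ := by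
  refine le_trans (norm_integral_le_of_norm_le_const
    (C := ∏ i : Fin r, ‖g i‖) (Eventually.of_forall fun ω => prod_bcf_bound g _)) ?_
  simp

lemma empir_prod_integral (hW : ∀ N j, Measurable (W N j)) {r N : ℕ} (hN : 0 < N)
    (g : Fin r → S →ᵇ ℝ) :
    ∫ ω, ∏ i : Fin r, ∫ x, g i x ∂(empir W N ω : Measure S) ∂P
      = ((N : ℝ) ^ r)⁻¹ * ∑ φ : Fin r → Fin N,
          ∫ ω, ∏ i : Fin r, g i (W N (φ i : ℕ) ω) ∂P := by
  have point : ∀ ω, ∏ i : Fin r, ∫ x, g i x ∂(empir W N ω : Measure S)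
      = ((N : ℝ) ^ r)⁻¹ * ∑ φ : Fin r → Fin N, ∏ i : Fin r, g i (W N (φ i : ℕ) ω) := by
    intro ω
    have : ∀ i : Fin r, ∫ x, g i x ∂(empir W N ω : Measure S)
        = (N : ℝ)⁻¹ * ∑ j : Fin N, g i (W N (j : ℕ) ω) := fun i => empir_integral (g i) hN ω
    simp only [this]
    rw [Finset.prod_mul_distrib, Finset.prod_const, Finset.card_univ, Fintype.card_fin,
      ← inv_pow]
    congr 1
    rw [Finset.prod_univ_sum]
    rw [Fintype.piFinset_univ]
  calc ∫ ω, ∏ i : Fin r, ∫ x, g i x ∂(empir W N ω : Measure S) ∂P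
      = ∫ ω, ((N : ℝ) ^ r)⁻¹ * ∑ φ : Fin r → Fin N,
          ∏ i : Fin r, g i (W N (φ i : ℕ) ω) ∂P := by simp only [point]
    _ = ((N : ℝ) ^ r)⁻¹ * ∑ φ : Fin r → Fin N,
          ∫ ω, ∏ i : Fin r, g i (W N (φ i : ℕ) ω) ∂P := by
        rw [integral_const_mul, integral_finset_sum _
          (fun φ _ => integrable_prod_comp hW g (fun i => (φ i : ℕ)))]

lemma integral_prod_exchange (hW : ∀ N j, Measurable (W N j))
    (hexch : ∀ (N : ℕ) (σ : Equiv.Perm (Fin N)),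
      P.map (fun ω (j : Fin N) => W N (j : ℕ) ω)
        = P.map (fun ω (j : Fin N) => W N ((σ j : Fin N) : ℕ) ω))
    {r N : ℕ} (hrN : r ≤ N) (g : Fin r → S →ᵇ ℝ) {φ : Fin r → Fin N}
    (hφ : Function.Injective φ) :
    ∫ ω, ∏ i : Fin r, g i (W N (φ i : ℕ) ω) ∂P
      = ∫ ω, ∏ i : Fin r, g i (W N (i : ℕ) ω) ∂P := by
  obtain ⟨σ, hσ⟩ := exchange_perm hrN hφ
  have hvec : Measurable fun ω (j : Fin N) => W N (j : ℕ) ω :=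
    measurable_pi_lambda _ fun j => hW N j
  have hvecσ : Measurable fun ω (j : Fin N) => W N ((σ j : Fin N) : ℕ) ω :=
    measurable_pi_lambda _ fun j => hW N _
  have hcont : Continuous fun y : Fin N → S => ∏ i : Fin r, g i (y (Fin.castLE hrN i)) :=
    continuous_finset_prod _ fun i _ => (g i).continuous.comp (continuous_apply _)
  have h1 : ∫ ω, ∏ i : Fin r, g i (W N (i : ℕ) ω) ∂P
      = ∫ y, ∏ i : Fin r, g i (y (Fin.castLE hrN i))
          ∂(P.map (fun ω (j : Fin N) => W N (j : ℕ) ω)) := by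
    rw [integral_map hvec.aemeasurable hcont.aestronglyMeasurable]
    simp [Fin.coe_castLE]
  have h2 : ∫ y, ∏ i : Fin r, g i (y (Fin.castLE hrN i))
          ∂(P.map (fun ω (j : Fin N) => W N ((σ j : Fin N) : ℕ) ω))
      = ∫ ω, ∏ i : Fin r, g i (W N (φ i : ℕ) ω) ∂P := by
    rw [integral_map hvecσ.aemeasurable hcont.aestronglyMeasurable]
    congr 1 with ω
    refine Finset.prod_congr rfl fun i _ => ?_
    simp [hσ i]
  rw [h1, hexch N σ, h2]

lemma key_diff_tendsto (hW : ∀ N j, Measurable (W N j))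
    (hexch : ∀ (N : ℕ) (σ : Equiv.Perm (Fin N)),
      P.map (fun ω (j : Fin N) => W N (j : ℕ) ω)
        = P.map (fun ω (j : Fin N) => W N ((σ j : Fin N) : ℕ) ω))
    {r : ℕ} (g : Fin r → S →ᵇ ℝ) :
    Tendsto (fun N : ℕ => (∫ ω, ∏ i : Fin r, ∫ x, g i x ∂(empir W N ω : Measure S) ∂P)
        - ∫ ω, ∏ i : Fin r, g i (W N (i : ℕ) ω) ∂P) atTop (𝓝 0) := by
  classical
  set C := ∏ i : Fin r, ‖g i‖ with hC
  have hC0 : 0 ≤ C := Finset.prod_nonneg fun i _ => norm_nonneg _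
  set D := fun N : ℕ => (∫ ω, ∏ i : Fin r, ∫ x, g i x ∂(empir W N ω : Measure S) ∂P)
        - ∫ ω, ∏ i : Fin r, g i (W N (i : ℕ) ω) ∂P with hD
  set B := fun N : ℕ => 2 * C * (1 - (N.descFactorial r : ℝ) / (N : ℝ) ^ r) with hBdef
  have hbound : ∀ N : ℕ, r ≤ N → 0 < N → |D N| ≤ B N := by
    intro N hrN hN
    have hNr0 : ((N : ℝ) ^ r) ≠ 0 := by positivity
    set A := ∫ ω, ∏ i : Fin r, g i (W N (i : ℕ) ω) ∂P with hA
    set T := fun φ : Fin r → Fin N => ∫ ω, ∏ i : Fin r, g i (W N (φ i : ℕ) ω) ∂P with hT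
    have hDN : D N = ((N : ℝ) ^ r)⁻¹ * ∑ φ : Fin r → Fin N, (T φ - A) := by
      rw [hD]
      simp only [empir_prod_integral hW hN g]
      rw [Finset.sum_sub_distrib, Finset.sum_const, Finset.card_univ, mul_sub]
      congr 1
      rw [nsmul_eq_mul, ← mul_assoc]
      rw [show ((Fintype.card (Fin r → Fin N) : ℝ)) = (N : ℝ) ^ r by
        rw [Fintype.card_fun]; push_cast [Fintype.card_fin]; ring]
      rw [inv_mul_cancel₀ hNr0, one_mul]
    have hterm : ∀ φ : Fin r → Fin N,
        |T φ - A| ≤ if Function.Injective φ then 0 else 2 * C := by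
      intro φ
      by_cases hφ : Function.Injective φ
      · simp [hφ, integral_prod_exchange hW hexch hrN g hφ, hT, hA]
      · simp only [hφ, if_false]
        calc |T φ - A| ≤ |T φ| + |A| := abs_sub _ _
          _ ≤ C + C := add_le_add
              (norm_integral_prod_le g (fun i => (φ i : ℕ)))
              (norm_integral_prod_le g (fun i => (i : ℕ)))
          _ = 2 * C := by ring
    have hcount : (Finset.univ.filter
        (fun φ : Fin r → Fin N => ¬ Function.Injective φ)).card
          = N ^ r - N.descFactorial r := by
      have h1 : (Finset.univ.filter
          (fun φ : Fin r → Fin N => Function.Injective φ)).card = N.descFactorial r := by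
        rw [← Fintype.card_subtype]
        rw [Fintype.card_congr (Equiv.subtypeInjectiveEquivEmbedding (Fin r) (Fin N))]
        simp [Fintype.card_embedding_eq]
      have h2 := Finset.card_filter_add_card_filter_not
        (s := (Finset.univ : Finset (Fin r → Fin N)))
        (p := fun φ : Fin r → Fin N => Function.Injective φ)
      rw [h1, Finset.card_univ, Fintype.card_fun, Fintype.card_fin, Fintype.card_fin] at h2
      omega
    calc |D N| = ((N : ℝ) ^ r)⁻¹ * |∑ φ : Fin r → Fin N, (T φ - A)| := by
          rw [hDN, abs_mul, abs_of_nonneg (by positivity)]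
      _ ≤ ((N : ℝ) ^ r)⁻¹ * ∑ φ : Fin r → Fin N, |T φ - A| := by
          gcongr
          exact Finset.abs_sum_le_sum_abs _ _
      _ ≤ ((N : ℝ) ^ r)⁻¹ * ∑ φ : Fin r → Fin N,
            (if Function.Injective φ then 0 else 2 * C) := by
          gcongr with φ hφ
          exact hterm φ
      _ = ((N : ℝ) ^ r)⁻¹ * (((N ^ r - N.descFactorial r : ℕ) : ℝ) * (2 * C)) := by
          rw [Finset.sum_ite, Finset.sum_const_zero, zero_add, Finset.sum_const, hcount,
            nsmul_eq_mul]
      _ = B N := by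
          rw [Nat.cast_sub (Nat.descFactorial_le_pow N r)]
          rw [hBdef]
          push_cast
          field_simp
  have hBlim : Tendsto B atTop (𝓝 0) := by
    have h0 : Tendsto (fun N : ℕ => 1 - (N.descFactorial r : ℝ) / (N : ℝ) ^ r) atTop
        (𝓝 (1 - 1)) := tendsto_const_nhds.sub (descFactorial_div_pow_tendsto r)
    have := h0.const_mul (2 * C)
    simpa using this
  have hBlim' : Tendsto (fun N => - B N) atTop (𝓝 0) := by simpa using hBlim.neg
  refine tendsto_of_tendsto_of_tendsto_of_le_of_le' hBlim' hBlim ?_ ?_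
  · filter_upwards [eventually_ge_atTop r, eventually_ge_atTop 1] with N h1 h2
    exact neg_le_of_abs_le (hbound N h1 h2)
  · filter_upwards [eventually_ge_atTop r, eventually_ge_atTop 1] with N h1 h2
    exact le_of_abs_le (hbound N h1 h2)

lemma chaotic_iff_moments (hW : ∀ N j, Measurable (W N j))
    (hexch : ∀ (N : ℕ) (σ : Equiv.Perm (Fin N)),
      P.map (fun ω (j : Fin N) => W N (j : ℕ) ω)
        = P.map (fun ω (j : Fin N) => W N ((σ j : Fin N) : ℕ) ω))
    (μ : Measure S) :
    IsChaotic P W μ ↔ ∀ (r : ℕ) (g : Fin r → S →ᵇ ℝ),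
      Tendsto (fun N : ℕ => ∫ ω, ∏ i : Fin r, ∫ x, g i x ∂(empir W N ω : Measure S) ∂P)
        atTop (𝓝 (∏ i : Fin r, ∫ x, g i x ∂μ)) := by
  constructor
  · intro h r g
    have h2 := key_diff_tendsto hW hexch g
    have h3 := h2.add (h r g)
    rw [zero_add] at h3
    exact h3.congr fun N => by ring
  · intro h r g
    have h2 := key_diff_tendsto hW hexch g
    have h3 := (h r g).sub h2
    rw [sub_zero] at h3
    exact h3.congr fun N => by ring

/-- The product-of-integrals test function on `ProbabilityMeasure S`, as a bounded
continuous function. -/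
def prodTest {S : Type*} [TopologicalSpace S] [MeasurableSpace S] [OpensMeasurableSpace S]
    {r : ℕ} (g : Fin r → S →ᵇ ℝ) :
    BoundedContinuousFunction (ProbabilityMeasure S) ℝ where
  toFun := fun ν => ∏ i : Fin r, ∫ x, g i x ∂(ν : Measure S)
  continuous_toFun := continuous_finset_prod _ fun i _ =>
    MeasureTheory.ProbabilityMeasure.continuous_integral_boundedContinuousFunction (g i)
  map_bounded' := by
    have hb : ∀ ν : ProbabilityMeasure S,
        |∏ i : Fin r, ∫ x, g i x ∂(ν : Measure S)| ≤ ∏ i : Fin r, ‖g i‖ := by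
      intro ν
      rw [Finset.abs_prod]
      refine Finset.prod_le_prod (fun i _ => abs_nonneg _) (fun i _ => ?_)
      exact (g i).norm_integral_le_norm (ν : Measure S)
    refine ⟨2 * ∏ i : Fin r, ‖g i‖, fun ν ν' => ?_⟩
    calc dist _ _ ≤ |∏ i : Fin r, ∫ x, g i x ∂(ν : Measure S)|
            + |∏ i : Fin r, ∫ x, g i x ∂(ν' : Measure S)| := by
          rw [Real.dist_eq]; exact abs_sub _ _
      _ ≤ _ := by rw [two_mul]; gcongr <;> [exact hb ν; exact hb ν']

@[simp] lemma prodTest_apply {S : Type*} [TopologicalSpace S] [MeasurableSpace S]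
    [OpensMeasurableSpace S] {r : ℕ} (g : Fin r → S →ᵇ ℝ) (ν : ProbabilityMeasure S) :
    prodTest g ν = ∏ i : Fin r, ∫ x, g i x ∂(ν : Measure S) := rfl

lemma empir_int_measurable (hW : ∀ N j, Measurable (W N j)) (f : S →ᵇ ℝ) (N : ℕ) :
    Measurable fun ω => ∫ x, f x ∂(empir W N ω : Measure S) := by
  rcases Nat.eq_zero_or_pos N with h | h
  · subst h
    have h0 : ∀ ω : Ω, (empir W 0 ω : Measure S) = Measure.dirac (W 0 0 ω) := fun ω => by
      rw [empir]; exact congrArg Subtype.val (dif_neg (lt_irrefl 0))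
    have : (fun ω => ∫ x, f x ∂(empir W 0 ω : Measure S))
        = fun ω => f (W 0 0 ω) := by
      funext ω
      rw [h0 ω, integral_dirac' f _ f.continuous.stronglyMeasurable]
    rw [this]
    exact f.continuous.measurable.comp (hW 0 0)
  · have : (fun ω => ∫ x, f x ∂(empir W N ω : Measure S))
        = fun ω => (N : ℝ)⁻¹ * ∑ j : Fin N, f (W N (j : ℕ) ω) := by
      funext ω; exact empir_integral f h ω
    rw [this]
    refine Measurable.const_mul ?_ _
    refine Finset.measurable_sum _ fun j _ => ?_
    exact f.continuous.measurable.comp (hW N j)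

lemma L2_tendsto (hW : ∀ N j, Measurable (W N j)) {μ : Measure S}
    (hmom : ∀ (r : ℕ) (g : Fin r → S →ᵇ ℝ),
      Tendsto (fun N : ℕ => ∫ ω, ∏ i : Fin r, ∫ x, g i x ∂(empir W N ω : Measure S) ∂P)
        atTop (𝓝 (∏ i : Fin r, ∫ x, g i x ∂μ)))
    (f : S →ᵇ ℝ) :
    Tendsto (fun N => ∫ ω, (∫ x, f x ∂(empir W N ω : Measure S) - ∫ x, f x ∂μ) ^ 2 ∂P)
      atTop (𝓝 0) := by
  set m := ∫ x, f x ∂μ with hm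
  set X := fun (N : ℕ) (ω : Ω) => ∫ x, f x ∂(empir W N ω : Measure S) with hX
  have hXb : ∀ N ω, |X N ω| ≤ ‖f‖ := fun N ω => by
    simpa [Real.norm_eq_abs] using f.norm_integral_le_norm (empir W N ω : Measure S)
  have hXmeas : ∀ N, Measurable (X N) := fun N => empir_int_measurable hW f N
  have hint1 : ∀ N, Integrable (X N) P := fun N =>
    ⟨(hXmeas N).aestronglyMeasurable,
      HasFiniteIntegral.of_bounded (C := ‖f‖) (Eventually.of_forall fun ω => by
        simpa [Real.norm_eq_abs] using hXb N ω)⟩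
  have hint2 : ∀ N, Integrable (fun ω => X N ω ^ 2) P := fun N =>
    ⟨((hXmeas N).pow_const 2).aestronglyMeasurable,
      HasFiniteIntegral.of_bounded (C := ‖f‖ ^ 2) (Eventually.of_forall fun ω => by
        rw [Real.norm_eq_abs, abs_pow]
        exact pow_le_pow_left₀ (abs_nonneg _) (hXb N ω) 2)⟩
  have hintsub : ∀ N, Integrable (fun ω => (X N ω - m) ^ 2) P := by
    intro N
    have : (fun ω => (X N ω - m) ^ 2)
        = fun ω => (X N ω ^ 2 - (2 * m) * X N ω) + m ^ 2 := by funext ω; ring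
    rw [this]
    exact ((hint2 N).sub ((hint1 N).const_mul _)).add (integrable_const _)
  have h1 : Tendsto (fun N => ∫ ω, X N ω ∂P) atTop (𝓝 m) := by
    have := hmom 1 (fun _ => f)
    simpa using this
  have h2 : Tendsto (fun N => ∫ ω, X N ω ^ 2 ∂P) atTop (𝓝 (m ^ 2)) := by
    have := hmom 2 (fun _ => f)
    simp only [Finset.prod_const, Finset.card_univ, Fintype.card_fin] at this
    exact this
  have key : ∀ N, ∫ ω, (X N ω - m) ^ 2 ∂P
      = ((∫ ω, X N ω ^ 2 ∂P) - (2 * m) * ∫ ω, X N ω ∂P) + m ^ 2 := by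
    intro N
    have hfe : (fun ω => (X N ω - m) ^ 2)
        = fun ω => (X N ω ^ 2 - (2 * m) * X N ω) + m ^ 2 := by funext ω; ring
    have ha : Integrable (fun ω => X N ω ^ 2 - 2 * m * X N ω) P :=
      (hint2 N).sub ((hint1 N).const_mul (2 * m))
    have hb : Integrable (fun ω => 2 * m * X N ω) P := (hint1 N).const_mul (2 * m)
    rw [hfe, integral_add ha (integrable_const _), integral_sub (hint2 N) hb,
      integral_const_mul, integral_const]
    simp [measure_univ]
  have hlim : Tendsto (fun N => ((∫ ω, X N ω ^ 2 ∂P) - (2 * m) * ∫ ω, X N ω ∂P) + m ^ 2)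
      atTop (𝓝 ((m ^ 2 - (2 * m) * m) + m ^ 2)) :=
    (h2.sub (h1.const_mul _)).add tendsto_const_nhds
  have : ((m ^ 2 - (2 * m) * m) + m ^ 2) = 0 := by ring
  rw [this] at hlim
  exact hlim.congr fun N => (key N).symm

end Aux

/-- **Sznitman's characterization of propagation of chaos.**
Let `S` be a Polish space, `μ` a Borel probability measure on `S`, and for each `N` let
`W N 0, …, W N (N-1)` be an exchangeable family of `S`-valued random elements on a
probability space `(Ω, P)`.  Then the triangular array is `μ`-chaotic if and only if the
empirical measures `ν_N = N⁻¹ ∑_{j < N} δ_{W N j}`, viewed as random elements of the space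
`P(S)` of Borel probability measures on `S` with the topology of weak convergence, converge
in distribution to the deterministic limit `μ`, i.e. `E[F(ν_N)] → F(μ)` for every bounded
continuous `F : P(S) → ℝ` (equivalently, the laws of `ν_N` converge weakly to the Dirac
measure at `μ`). -/
theorem isChaotic_iff_empirical_tendsto_dirac
    {Ω S : Type*} [MeasurableSpace Ω] (P : Measure Ω) [IsProbabilityMeasure P]
    [TopologicalSpace S] [PolishSpace S] [MeasurableSpace S] [BorelSpace S]
    (μ : Measure S) (hμ : IsProbabilityMeasure μ)
    (W : ℕ → ℕ → Ω → S) (hW : ∀ N j, Measurable (W N j))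
    (hexch : ∀ (N : ℕ) (σ : Equiv.Perm (Fin N)),
      P.map (fun ω (j : Fin N) => W N (j : ℕ) ω)
        = P.map (fun ω (j : Fin N) => W N ((σ j : Fin N) : ℕ) ω)) :
    IsChaotic P W μ ↔
      ∀ F : BoundedContinuousFunction (ProbabilityMeasure S) ℝ,
        Tendsto (fun N : ℕ => ∫ ω, F (empir W N ω) ∂P) atTop
          (𝓝 (F (⟨μ, hμ⟩ : ProbabilityMeasure S))) := by
  constructor
  · -- chaos implies convergence in distribution of the empirical measures
    intro hchaos F
    have hmom := (chaotic_iff_moments hW hexch μ).mp hchaos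
    set μ₀ : ProbabilityMeasure S := ⟨μ, hμ⟩ with hμ₀
    rw [Metric.tendsto_atTop]
    intro ε hε
    -- the open neighbourhood where `F` varies by less than `ε/2`
    set U : Set (ProbabilityMeasure S) := F ⁻¹' Metric.ball (F μ₀) (ε / 2) with hUdef
    have hUopen : IsOpen U := F.continuous.isOpen_preimage _ Metric.isOpen_ball
    have hμ₀U : μ₀ ∈ U := by
      simp only [hUdef, Set.mem_preimage, Metric.mem_ball, dist_self]
      positivity
    obtain ⟨I, ε', hε'pos, hconc⟩ := nbhd_basis hUopen hμ₀U
    -- convergence in probability for each test function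
    have hteq : ∀ (f : S →ᵇ NNReal) (ν : ProbabilityMeasure S),
        dist (ν.toFiniteMeasure.testAgainstNN f) (μ₀.toFiniteMeasure.testAgainstNN f)
        = |∫ x, toRealBCF f x ∂(ν : Measure S) - ∫ x, toRealBCF f x ∂μ| := by
      intro f ν
      rw [NNReal.dist_eq, testAgainstNN_toReal, testAgainstNN_toReal]
      rfl
    have hptend : ∀ f : S →ᵇ NNReal, Tendsto (fun N =>
        (P {ω | ε' f ≤ dist ((empir W N ω).toFiniteMeasure.testAgainstNN f)
          (μ₀.toFiniteMeasure.testAgainstNN f)}).toReal) atTop (𝓝 0) := by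
      intro f
      have hL2 := L2_tendsto hW hmom (toRealBCF f)
      have hintsub : ∀ N, Integrable (fun ω =>
          (∫ x, toRealBCF f x ∂(empir W N ω : Measure S) - ∫ x, toRealBCF f x ∂μ) ^ 2) P := by
        intro N
        have hmeas := empir_int_measurable hW (toRealBCF f) N
        refine ⟨((hmeas.sub measurable_const).pow_const 2).aestronglyMeasurable,
          HasFiniteIntegral.of_bounded (C := (‖toRealBCF f‖ + ‖toRealBCF f‖) ^ 2)
            (Eventually.of_forall fun ω => ?_)⟩
        rw [Real.norm_eq_abs, abs_pow]
        refine pow_le_pow_left₀ (abs_nonneg _) ?_ 2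
        refine le_trans (abs_sub _ _) (add_le_add ?_ ?_)
        · simpa [Real.norm_eq_abs] using
            (toRealBCF f).norm_integral_le_norm (empir W N ω : Measure S)
        · simpa [Real.norm_eq_abs] using (toRealBCF f).norm_integral_le_norm μ
      have := tendsto_prob_of_L2 hintsub hL2 (hε'pos f)
      refine this.congr fun N => ?_
      congr 1
      apply congrArg
      ext ω
      rw [Set.mem_setOf_eq, Set.mem_setOf_eq, hteq f (empir W N ω)]
    have hsum : Tendsto (fun N => ∑ f ∈ I,
        (P {ω | ε' f ≤ dist ((empir W N ω).toFiniteMeasure.testAgainstNN f)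
          (μ₀.toFiniteMeasure.testAgainstNN f)}).toReal) atTop (𝓝 0) := by
      have := tendsto_finset_sum I (fun f (_ : f ∈ I) => hptend f)
      simpa using this
    set δ := ε / (4 * (‖F‖ + 1)) with hδdef
    have hδpos : 0 < δ := by positivity
    obtain ⟨N₁, hN₁⟩ := (Metric.tendsto_atTop.mp hsum) δ hδpos
    refine ⟨max N₁ 1, fun N hN => ?_⟩
    have hN1 : 0 < N := lt_of_lt_of_le Nat.zero_lt_one (le_trans (le_max_right _ _) hN)
    have hNN₁ : N₁ ≤ N := le_trans (le_max_left _ _) hN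
    -- the bad event
    set B : Set Ω := {ω | empir W N ω ∉ U} with hBdef
    have hempeq : (fun ω : Ω => empir W N ω)
        = empFin hN1 ∘ (fun ω (j : Fin N) => W N (j : ℕ) ω) :=
      funext fun ω => empir_eq_empFin hN1 ω
    have hvec : Measurable fun ω (j : Fin N) => W N (j : ℕ) ω :=
      measurable_pi_lambda _ fun j => hW N j
    have hBmeas : MeasurableSet B := by
      have hclosed : IsClosed (empFin (S := S) hN1 ⁻¹' Uᶜ) :=
        hUopen.isClosed_compl.preimage (continuous_empFin hN1)
      have : B = (fun ω (j : Fin N) => W N (j : ℕ) ω) ⁻¹' (empFin hN1 ⁻¹' Uᶜ) := by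
        ext ω
        simp only [hBdef, Set.mem_setOf_eq, Set.mem_preimage, Set.mem_compl_iff]
        rw [show empFin hN1 (fun j : Fin N => W N (j : ℕ) ω) = empir W N ω from
          (empir_eq_empFin hN1 ω).symm]
      rw [this]
      exact hvec hclosed.measurableSet
    have hFmeas : Measurable fun ω => F (empir W N ω) := by
      have hre : (fun ω => F (empir W N ω))
          = (F ∘ empFin hN1) ∘ (fun ω (j : Fin N) => W N (j : ℕ) ω) := by
        funext ω
        simp only [Function.comp_apply]
        rw [empir_eq_empFin hN1 ω]
      rw [hre]
      exact ((F.continuous.comp (continuous_empFin hN1)).measurable).comp hvec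
    have hFint : Integrable (fun ω => F (empir W N ω)) P :=
      ⟨hFmeas.aestronglyMeasurable, HasFiniteIntegral.of_bounded (C := ‖F‖)
        (Eventually.of_forall fun ω => F.norm_coe_le_norm _)⟩
    -- bound on the bad event's probability
    have hBsub : B ⊆ ⋃ f ∈ I, {ω | ε' f ≤
        dist ((empir W N ω).toFiniteMeasure.testAgainstNN f)
          (μ₀.toFiniteMeasure.testAgainstNN f)} := by
      intro ω hω
      by_contra hcon
      simp only [Set.mem_iUnion, Set.mem_setOf_eq, not_exists, not_le] at hcon
      exact hω (hconc (empir W N ω) fun f hf => by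
        have := hcon f
        exact this hf)
    have hPB : (P B).toReal ≤ ∑ f ∈ I,
        (P {ω | ε' f ≤ dist ((empir W N ω).toFiniteMeasure.testAgainstNN f)
          (μ₀.toFiniteMeasure.testAgainstNN f)}).toReal := by
      calc (P B).toReal
          ≤ (P (⋃ f ∈ I, {ω | ε' f ≤
              dist ((empir W N ω).toFiniteMeasure.testAgainstNN f)
                (μ₀.toFiniteMeasure.testAgainstNN f)})).toReal :=
            ENNReal.toReal_mono (measure_ne_top _ _) (measure_mono hBsub)
        _ ≤ (∑ f ∈ I, P {ω | ε' f ≤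
              dist ((empir W N ω).toFiniteMeasure.testAgainstNN f)
                (μ₀.toFiniteMeasure.testAgainstNN f)}).toReal :=
            ENNReal.toReal_mono
              (ENNReal.sum_lt_top.mpr fun f _ => measure_lt_top _ _).ne
              (measure_biUnion_finset_le _ _)
        _ = _ := ENNReal.toReal_sum fun f _ => measure_ne_top _ _
    have hPB0 : 0 ≤ (P B).toReal := ENNReal.toReal_nonneg
    have hsmall : ∑ f ∈ I,
        (P {ω | ε' f ≤ dist ((empir W N ω).toFiniteMeasure.testAgainstNN f)
          (μ₀.toFiniteMeasure.testAgainstNN f)}).toReal < δ := by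
      have := hN₁ N hNN₁
      rw [Real.dist_eq, sub_zero] at this
      exact lt_of_abs_lt this
    -- pointwise bound and integration
    have hpoint : ∀ ω, |F (empir W N ω) - F μ₀|
        ≤ ε / 2 + B.indicator (fun _ => 2 * ‖F‖) ω := by
      intro ω
      by_cases hω : ω ∈ B
      · rw [Set.indicator_of_mem hω]
        have h1 : |F (empir W N ω) - F μ₀| ≤ 2 * ‖F‖ := by
          refine le_trans (abs_sub _ _) ?_
          rw [two_mul]
          exact add_le_add (F.norm_coe_le_norm _) (F.norm_coe_le_norm _)
        linarith [hε.le]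
      · rw [Set.indicator_of_notMem hω, add_zero]
        have : empir W N ω ∈ U := not_not.mp hω
        have := this
        rw [hUdef, Set.mem_preimage, Metric.mem_ball, Real.dist_eq] at this
        exact this.le
    calc dist (∫ ω, F (empir W N ω) ∂P) (F μ₀)
        = |∫ ω, (F (empir W N ω) - F μ₀) ∂P| := by
          rw [Real.dist_eq, integral_sub hFint (integrable_const _), integral_const]
          simp [measure_univ]
      _ ≤ ∫ ω, |F (empir W N ω) - F μ₀| ∂P := by
          simpa [Real.norm_eq_abs] using
            norm_integral_le_integral_norm (fun ω => F (empir W N ω) - F μ₀) (μ := P)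
      _ ≤ ∫ ω, (ε / 2 + B.indicator (fun _ => 2 * ‖F‖) ω) ∂P := by
          refine integral_mono ((hFint.sub (integrable_const _)).abs) ?_ hpoint
          exact (integrable_const _).add ((integrable_const _).indicator hBmeas)
      _ = ε / 2 + 2 * ‖F‖ * (P B).toReal := by
          rw [integral_add (integrable_const _) ((integrable_const _).indicator hBmeas),
            integral_const, integral_indicator_const _ hBmeas]
          simp [measure_univ, smul_eq_mul, measureReal_def]
          ring
      _ < ε := by
          have hFn : 0 ≤ ‖F‖ := norm_nonneg F
          have ht : (P B).toReal < δ := lt_of_le_of_lt hPB hsmall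
          rw [hδdef] at ht
          have ht' : (P B).toReal * (4 * (‖F‖ + 1)) < ε :=
            (lt_div_iff₀ (by positivity)).mp ht
          nlinarith [hPB0, hFn, ht']
  · -- convergence in distribution implies chaos
    intro hb
    rw [chaotic_iff_moments hW hexch μ]
    intro r g
    have := hb (prodTest g)
    exact this

end
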